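/- Let the coupling J_A take the two values +J and −J each with probability 1/2 (all other couplings arbitrary but fixed). Then the average deviation satisfies E[Δ(β,J_A)] = ½(Δ(β,J) + Δ(β,−J)) ≥ 0 for every β > 0, where Δ(β,J_A) = e_A(β,J_A) + J_A tanh(βJ_A). -/

import Mathlib

open Finset Real

/-- Spin value of a Boolean spin variable: `true ↦ 1`, `false ↦ -1`. -/
def spin (b : Bool) : ℝ := if b then 1 else -1

/-- Energy of a finite Ising system: `H(S) = -∑_{A ⊆ V} J_A ∏_{i ∈ A} S_i`. -/
noncomputable def energy {V : Type*} [Fintype V] [DecidableEq V]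
    (J : Finset V → ℝ) (S : V → Bool) : ℝ :=
  -∑ A : Finset V, J A * ∏ i ∈ A, spin (S i)

/-- Partition function `Z(β, J) = ∑_S exp (-β H(S))`. -/
noncomputable def Z {V : Type*} [Fintype V] [DecidableEq V]
    (β : ℝ) (J : Finset V → ℝ) : ℝ :=
  ∑ S : V → Bool, Real.exp (-β * energy J S)

/-- Thermal average `⟨f⟩_β = Z⁻¹ ∑_S f(S) exp (-β H(S))`. -/
noncomputable def texp {V : Type*} [Fintype V] [DecidableEq V]
    (β : ℝ) (J : Finset V → ℝ) (f : (V → Bool) → ℝ) : ℝ :=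
  (∑ S : V → Bool, f S * Real.exp (-β * energy J S)) / Z β J

/-- Thermal average of the local energy of subset `A`:
`e_A(β, J_A) = -⟨J_A ∏_{i ∈ A} S_i⟩_β`. -/
noncomputable def eA {V : Type*} [Fintype V] [DecidableEq V]
    (β : ℝ) (J : Finset V → ℝ) (A : Finset V) : ℝ :=
  texp β J (fun S => -(J A * ∏ i ∈ A, spin (S i)))

/-- Deviation of the local energy from its isolated value:
`Δ(β, J_A) = e_A(β, J_A) + J_A tanh (β J_A)`. -/
noncomputable def Δ {V : Type*} [Fintype V] [DecidableEq V]
    (β : ℝ) (J : Finset V → ℝ) (A : Finset V) : ℝ :=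
  eA β J A + J A * Real.tanh (β * J A)

/-- Couplings with the single coupling `J_A` negated. -/
noncomputable def flipJ {V : Type*} [DecidableEq V]
    (J : Finset V → ℝ) (A : Finset V) : Finset V → ℝ :=
  Function.update J A (-(J A))

/- ---------------- auxiliary material ---------------- -/

lemma spin_eq_or (b : Bool) : spin b = 1 ∨ spin b = -1 := by
  cases b <;> simp [spin]

lemma prod_spin_eq_or {V : Type*} [DecidableEq V] (A : Finset V) (S : V → Bool) :
    (∏ i ∈ A, spin (S i)) = 1 ∨ (∏ i ∈ A, spin (S i)) = -1 := by
  induction A using Finset.induction_on with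
  | empty => simp
  | @insert a s h ih =>
    rw [Finset.prod_insert h]
    rcases spin_eq_or (S _) with h1 | h1 <;> rcases ih with h2 | h2 <;>
      rw [h1, h2] <;> norm_num

/-- The rest of the exponent: `β ∑_{B ≠ A} J_B ∏_{i∈B} S_i`. -/
noncomputable def restE {V : Type*} [Fintype V] [DecidableEq V]
    (β : ℝ) (J : Finset V → ℝ) (A : Finset V) (S : V → Bool) : ℝ :=
  β * ∑ B ∈ Finset.univ.erase A, J B * ∏ i ∈ B, spin (S i)

open Classical in
noncomputable def aSum {V : Type*} [Fintype V] [DecidableEq V]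
    (β : ℝ) (J : Finset V → ℝ) (A : Finset V) : ℝ :=
  ∑ S ∈ Finset.univ.filter (fun S => (∏ i ∈ A, spin (S i)) = 1),
    Real.exp (restE β J A S)

open Classical in
noncomputable def bSum {V : Type*} [Fintype V] [DecidableEq V]
    (β : ℝ) (J : Finset V → ℝ) (A : Finset V) : ℝ :=
  ∑ S ∈ Finset.univ.filter (fun S => ¬ (∏ i ∈ A, spin (S i)) = 1),
    Real.exp (restE β J A S)

open Classical in
lemma sum_split {V : Type*} [Fintype V] [DecidableEq V] (A : Finset V)
    (h : ℝ → ℝ) (g : (V → Bool) → ℝ) :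
    ∑ S : V → Bool, h (∏ i ∈ A, spin (S i)) * g S
      = h 1 * ∑ S ∈ Finset.univ.filter (fun S => (∏ i ∈ A, spin (S i)) = 1), g S
      + h (-1) * ∑ S ∈ Finset.univ.filter (fun S => ¬ (∏ i ∈ A, spin (S i)) = 1), g S := by
  rw [← Finset.sum_filter_add_sum_filter_not Finset.univ
      (fun S => (∏ i ∈ A, spin (S i)) = 1), Finset.mul_sum, Finset.mul_sum]
  congr 1
  · exact Finset.sum_congr rfl fun S hS => by rw [(Finset.mem_filter.1 hS).2]
  · refine Finset.sum_congr rfl fun S hS => ?_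
    rcases prod_spin_eq_or A S with h1 | h1
    · exact absurd h1 (Finset.mem_filter.1 hS).2
    · rw [h1]

lemma exp_energy_update {V : Type*} [Fintype V] [DecidableEq V]
    (β : ℝ) (J : Finset V → ℝ) (A : Finset V) (c : ℝ) (S : V → Bool) :
    Real.exp (-β * energy (Function.update J A c) S)
      = Real.exp (β * c * (∏ i ∈ A, spin (S i))) * Real.exp (restE β J A S) := by
  rw [← Real.exp_add]
  congr 1
  unfold energy restE
  rw [← Finset.add_sum_erase _ _ (Finset.mem_univ A), Function.update_self]
  rw [Finset.sum_congr rfl (fun B hB => by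
    rw [Function.update_of_ne (Finset.ne_of_mem_erase hB)])]
  ring

lemma keyZ {V : Type*} [Fintype V] [DecidableEq V]
    (β : ℝ) (J : Finset V → ℝ) (A : Finset V) (c : ℝ) :
    Z β (Function.update J A c)
      = Real.exp (β * c) * aSum β J A + Real.exp (-(β * c)) * bSum β J A := by
  unfold Z
  calc ∑ S : V → Bool, Real.exp (-β * energy (Function.update J A c) S)
      = ∑ S : V → Bool, (fun p => Real.exp (β * c * p)) (∏ i ∈ A, spin (S i))
          * Real.exp (restE β J A S) := by
        exact Finset.sum_congr rfl fun S _ => exp_energy_update β J A c S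
    _ = _ := by
        rw [sum_split A (fun p => Real.exp (β * c * p)) (fun S => Real.exp (restE β J A S))]
        simp only [mul_one, mul_neg_one]
        rfl

lemma keyN {V : Type*} [Fintype V] [DecidableEq V]
    (β : ℝ) (J : Finset V → ℝ) (A : Finset V) (c : ℝ) :
    (∑ S : V → Bool, -(c * ∏ i ∈ A, spin (S i))
        * Real.exp (-β * energy (Function.update J A c) S))
      = -c * Real.exp (β * c) * aSum β J A + c * Real.exp (-(β * c)) * bSum β J A := by
  calc ∑ S : V → Bool, -(c * ∏ i ∈ A, spin (S i))
        * Real.exp (-β * energy (Function.update J A c) S)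
      = ∑ S : V → Bool, (fun p => -(c * p) * Real.exp (β * c * p)) (∏ i ∈ A, spin (S i))
          * Real.exp (restE β J A S) := by
        refine Finset.sum_congr rfl fun S _ => ?_
        rw [exp_energy_update β J A c S]; ring
    _ = _ := by
        rw [sum_split A (fun p => -(c * p) * Real.exp (β * c * p))
          (fun S => Real.exp (restE β J A S))]
        simp only [mul_one, mul_neg_one, mul_neg, neg_neg]
        show -c * Real.exp (β*c) * aSum β J A + c * Real.exp (-(β*c)) * bSum β J A = _
        ring

lemma aSum_nonneg {V : Type*} [Fintype V] [DecidableEq V]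
    (β : ℝ) (J : Finset V → ℝ) (A : Finset V) : 0 ≤ aSum β J A :=
  Finset.sum_nonneg fun S _ => (Real.exp_pos _).le

lemma bSum_nonneg {V : Type*} [Fintype V] [DecidableEq V]
    (β : ℝ) (J : Finset V → ℝ) (A : Finset V) : 0 ≤ bSum β J A :=
  Finset.sum_nonneg fun S _ => (Real.exp_pos _).le

open Classical in
lemma abSum_pos {V : Type*} [Fintype V] [DecidableEq V]
    (β : ℝ) (J : Finset V → ℝ) (A : Finset V) : 0 < aSum β J A + bSum β J A := by
  unfold aSum bSum
  rw [Finset.sum_filter_add_sum_filter_not Finset.univ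
      (fun S => (∏ i ∈ A, spin (S i)) = 1) (fun S => Real.exp (restE β J A S))]
  exact Finset.sum_pos (fun S _ => Real.exp_pos _) Finset.univ_nonempty

lemma tanh_formula (x : ℝ) :
    Real.tanh x = (Real.exp x - (Real.exp x)⁻¹) / (Real.exp x + (Real.exp x)⁻¹) := by
  rw [Real.tanh_eq_sinh_div_cosh, Real.sinh_eq, Real.cosh_eq, Real.exp_neg]
  have h : Real.exp x + (Real.exp x)⁻¹ ≠ 0 := by positivity
  field_simp

lemma ineq (J0 u a b : ℝ) (hJ : 0 < J0) (hu : 1 < u) (ha : 0 ≤ a) (hb : 0 ≤ b)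
    (hab : 0 < a + b) :
    ((-(J0) * u * a + J0 * u⁻¹ * b) / (u * a + u⁻¹ * b) + J0 * ((u - u⁻¹) / (u + u⁻¹))
      + ((J0 * u⁻¹ * a + -(J0) * u * b) / (u⁻¹ * a + u * b) + J0 * ((u - u⁻¹) / (u + u⁻¹)))) / 2
      ≥ 0 := by
  have hu0 : 0 < u := by linarith
  have hui : 0 < u⁻¹ := by positivity
  have hb' : a = 0 → 0 < b := fun h => by rw [h] at hab; linarith
  have hd1 : 0 < u * a + u⁻¹ * b := by
    rcases lt_or_ge 0 a with h | h
    · nlinarith [mul_nonneg hui.le hb, mul_pos hu0 h]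
    · have h0 : a = 0 := le_antisymm h ha
      rw [h0]; nlinarith [mul_pos hui (hb' h0)]
  have hd2 : 0 < u⁻¹ * a + u * b := by
    rcases lt_or_ge 0 a with h | h
    · nlinarith [mul_nonneg hu0.le hb, mul_pos hui h]
    · have h0 : a = 0 := le_antisymm h ha
      rw [h0]; nlinarith [mul_pos hu0 (hb' h0)]
  have hd3 : 0 < u + u⁻¹ := by positivity
  have huv : u * u⁻¹ = 1 := mul_inv_cancel₀ (ne_of_gt hu0)
  have hums : 0 ≤ u - u⁻¹ := by
    have : u⁻¹ < 1 := by rw [inv_lt_one_iff₀]; right; exact hu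
    linarith
  rw [ge_iff_le]
  apply div_nonneg _ (by norm_num)
  rw [← mul_div_assoc,
    div_add_div _ _ (ne_of_gt hd1) (ne_of_gt hd3), div_add_div _ _ (ne_of_gt hd2) (ne_of_gt hd3),
    div_add_div _ _ (ne_of_gt (mul_pos hd1 hd3)) (ne_of_gt (mul_pos hd2 hd3))]
  apply div_nonneg _ (le_of_lt (mul_pos (mul_pos hd1 hd3) (mul_pos hd2 hd3)))
  have cert : 0 ≤ 2 * J0 * (u - u⁻¹) * (a - b)^2 := by positivity
  nlinarith [mul_nonneg (mul_nonneg cert hd3.le) (mul_pos hu0 hui).le]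

/-- for a symmetric `±J` coupling on `A`, the average deviation
`E[Δ(β,J_A)] = (Δ(β,J) + Δ(β,-J))/2` is nonnegative. -/
theorem average_Delta_nonneg {V : Type*} [Fintype V] [DecidableEq V]
    (β J0 : ℝ) (hβ : 0 < β) (hJ : 0 < J0) (J : Finset V → ℝ) (A : Finset V) :
    (Δ β (Function.update J A J0) A + Δ β (Function.update J A (-J0)) A) / 2
      ≥ 0 := by
  set u := Real.exp (β * J0) with hu_def
  set a := aSum β J A with ha_def
  set b := bSum β J A with hb_def
  have hu1 : 1 < u := by
    rw [hu_def, ← Real.exp_zero]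
    exact Real.exp_lt_exp.2 (by positivity)
  have hexpneg : Real.exp (-(β * J0)) = u⁻¹ := by rw [Real.exp_neg]
  have hmneg : β * -J0 = -(β * J0) := by ring
  have hmneg' : -(β * -J0) = β * J0 := by ring
  have hDp : Δ β (Function.update J A J0) A
      = (-J0 * u * a + J0 * u⁻¹ * b) / (u * a + u⁻¹ * b)
        + J0 * ((u - u⁻¹) / (u + u⁻¹)) := by
    unfold Δ eA texp
    simp only [Function.update_self]
    rw [keyN β J A J0, keyZ β J A J0, hexpneg, tanh_formula (β * J0)]
  have hDm : Δ β (Function.update J A (-J0)) A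
      = (J0 * u⁻¹ * a + -J0 * u * b) / (u⁻¹ * a + u * b)
        + J0 * ((u - u⁻¹) / (u + u⁻¹)) := by
    unfold Δ eA texp
    simp only [Function.update_self]
    rw [keyN β J A (-J0), keyZ β J A (-J0), hmneg', hmneg, hexpneg,
      Real.tanh_neg, tanh_formula (β * J0), ← hu_def]
    ring
  rw [hDp, hDm]
  exact ineq J0 u a b hJ hu1 (aSum_nonneg β J A) (bSum_nonneg β J A) (abSum_pos β J A)
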